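/- For 1 ≤ p < 2, there exists a constant C such that for all t ≥ 1, t^p · ∫ |τ̂(t + z, 2)·t − 1|^p φ(z) dz ≤ C, where τ̂(x, 2) = (1/√2)(1 − Φ(x/√2))/φ(x/√2). -/

import Mathlib

open MeasureTheory ProbabilityTheory Filter

/-- Standard normal density `φ`. -/
noncomputable def stdPDF (x : ℝ) : ℝ :=
  (Real.sqrt (2 * Real.pi))⁻¹ * Real.exp (-(x ^ 2) / 2)

lemma stdPDF_pos (x : ℝ) : 0 < stdPDF x := by
  unfold stdPDF
  positivity

lemma stdPDF_eq (x : ℝ) : stdPDF x = (Real.sqrt (2*Real.pi))⁻¹ * Real.exp (-(1/2) * x^2) := by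
  unfold stdPDF; ring_nf

lemma integrable_stdPDF : Integrable stdPDF := by
  have := (integrable_exp_neg_mul_sq (b := 1/2) (by norm_num)).const_mul (Real.sqrt (2*Real.pi))⁻¹
  refine this.congr ?_
  filter_upwards with x
  rw [stdPDF_eq]

lemma integral_stdPDF : ∫ x, stdPDF x = 1 := by
  have h : ∫ x, stdPDF x = (Real.sqrt (2*Real.pi))⁻¹ * ∫ x, Real.exp (-(1/2) * x^2) := by
    rw [← MeasureTheory.integral_const_mul]
    congr 1; ext x; rw [stdPDF_eq]
  rw [h, integral_gaussian]
  have : Real.sqrt (Real.pi / (1/2)) = Real.sqrt (2 * Real.pi) := by norm_num [mul_comm]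
  rw [this, inv_mul_cancel₀]
  positivity

lemma continuous_stdPDF : Continuous stdPDF := by
  unfold stdPDF; fun_prop

/-- Standard normal CDF `Φ`. -/
noncomputable def stdCDF (x : ℝ) : ℝ := ∫ t in Set.Iic x, stdPDF t

noncomputable def stdTail (u : ℝ) : ℝ := ∫ s in Set.Ioi u, stdPDF s

lemma stdCDF_add_tail (u : ℝ) : stdCDF u + stdTail u = 1 := by
  rw [stdCDF, stdTail, intervalIntegral.integral_Iic_add_Ioi integrable_stdPDF.integrableOn
    integrable_stdPDF.integrableOn, integral_stdPDF]

lemma stdTail_nonneg (u : ℝ) : 0 ≤ stdTail u :=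
  setIntegral_nonneg measurableSet_Ioi (fun x _ => (stdPDF_pos x).le)

lemma stdTail_le_one (u : ℝ) : stdTail u ≤ 1 := by
  have h := stdCDF_add_tail u
  have : 0 ≤ stdCDF u := setIntegral_nonneg measurableSet_Iic (fun x _ => (stdPDF_pos x).le)
  linarith

lemma one_sub_stdCDF (u : ℝ) : 1 - stdCDF u = stdTail u := by
  have := stdCDF_add_tail u; linarith

lemma hasDerivAt_neg_stdPDF (s : ℝ) :
    HasDerivAt (fun s => -stdPDF s) (s * stdPDF s) s := by
  have h1 : HasDerivAt (fun s : ℝ => -(s^2)/2) (-s) s := by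
    have h := (hasDerivAt_pow 2 s).neg.div_const 2
    norm_num at h
    exact h.congr_deriv (by ring)
  have h2 := (h1.exp.const_mul (Real.sqrt (2*Real.pi))⁻¹).neg
  have heq : s * stdPDF s = -((Real.sqrt (2*Real.pi))⁻¹ * (Real.exp (-(s^2)/2) * -s)) := by
    unfold stdPDF; ring
  rw [heq]; exact h2

lemma integrable_mul_stdPDF : Integrable (fun s => s * stdPDF s) := by
  have hg : Integrable (fun s : ℝ => 2 * (Real.sqrt (2*Real.pi))⁻¹ * Real.exp (-(3/8) * s^2)) :=
    (integrable_exp_neg_mul_sq (by norm_num)).const_mul _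
  refine hg.mono' (continuous_id.mul continuous_stdPDF).aestronglyMeasurable ?_
  filter_upwards with s
  have habs : |s| ≤ 2 * Real.exp (s^2/8) := by
    nlinarith [sq_nonneg (|s| - 2), sq_abs s, Real.add_one_le_exp (s^2/8)]
  have hnorm : ‖s * stdPDF s‖ = |s| * stdPDF s := by
    rw [norm_mul, Real.norm_eq_abs, Real.norm_eq_abs, abs_of_pos (stdPDF_pos s)]
  rw [hnorm]
  unfold stdPDF
  have hkey : |s| * Real.exp (-(s^2)/2) ≤ 2 * Real.exp (-(3/8) * s^2) := by
    have : Real.exp (s^2/8) * Real.exp (-(s^2)/2) = Real.exp (-(3/8) * s^2) := by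
      rw [← Real.exp_add]; ring_nf
    calc |s| * Real.exp (-(s^2)/2) ≤ 2 * Real.exp (s^2/8) * Real.exp (-(s^2)/2) := by
          have := Real.exp_pos (-(s^2)/2)
          nlinarith
      _ = 2 * Real.exp (-(3/8) * s^2) := by rw [mul_assoc, this]
  have hc : (0:ℝ) < (Real.sqrt (2*Real.pi))⁻¹ := by positivity
  calc |s| * ((Real.sqrt (2*Real.pi))⁻¹ * Real.exp (-(s^2)/2))
      = (Real.sqrt (2*Real.pi))⁻¹ * (|s| * Real.exp (-(s^2)/2)) := by ring
    _ ≤ (Real.sqrt (2*Real.pi))⁻¹ * (2 * Real.exp (-(3/8) * s^2)) := by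
        exact mul_le_mul_of_nonneg_left hkey hc.le
    _ = 2 * (Real.sqrt (2*Real.pi))⁻¹ * Real.exp (-(3/8) * s^2) := by ring

lemma tendsto_stdPDF_atTop : Tendsto stdPDF atTop (nhds 0) := by
  have h0 : Tendsto (fun s : ℝ => s^2) atTop atTop := tendsto_pow_atTop (by norm_num)
  have h1 : Tendsto (fun s : ℝ => -(s^2)/2) atTop atBot := by
    have := (tendsto_neg_atTop_atBot.comp h0).atBot_mul_const' (r := (1:ℝ)/2) (by norm_num)
    exact this.congr (fun s => by simp [Function.comp]; ring)
  have h2 := Real.tendsto_exp_atBot.comp h1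
  have h3 := h2.const_mul (Real.sqrt (2*Real.pi))⁻¹
  rw [mul_zero] at h3
  exact h3.congr (fun x => by simp [Function.comp, stdPDF])

lemma integral_mul_stdPDF_Ioi (u : ℝ) :
    ∫ s in Set.Ioi u, s * stdPDF s = stdPDF u := by
  have := integral_Ioi_of_hasDerivAt_of_tendsto' (a := u) (f := fun s => -stdPDF s)
    (f' := fun s => s * stdPDF s) (fun x _ => hasDerivAt_neg_stdPDF x)
    integrable_mul_stdPDF.integrableOn (tendsto_stdPDF_atTop.neg.congr' ?_)
  · simpa using this
  · filter_upwards with s; simp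


lemma millsUp {u : ℝ} (hu : 0 < u) : stdTail u ≤ stdPDF u / u := by
  have key := integral_mul_stdPDF_Ioi u
  have hmono : stdTail u ≤ ∫ s in Set.Ioi u, (1/u) * (s * stdPDF s) := by
    rw [stdTail]
    refine setIntegral_mono_on integrable_stdPDF.integrableOn
      (integrable_mul_stdPDF.integrableOn.const_mul _) measurableSet_Ioi ?_
    intro s hs
    have hs' : u < s := hs
    have hps := stdPDF_pos s
    calc stdPDF s = (1/u) * (u * stdPDF s) := by field_simp
      _ ≤ (1/u) * (s * stdPDF s) := by
          have h1 : (0:ℝ) ≤ 1/u := by positivity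
          have h2 : u * stdPDF s ≤ s * stdPDF s :=
            mul_le_mul_of_nonneg_right hs'.le hps.le
          exact mul_le_mul_of_nonneg_left h2 h1
  calc stdTail u ≤ ∫ s in Set.Ioi u, (1/u) * (s * stdPDF s) := hmono
    _ = (1/u) * ∫ s in Set.Ioi u, s * stdPDF s := MeasureTheory.integral_const_mul _ _
    _ = stdPDF u / u := by rw [key]; ring

lemma millsLow {u : ℝ} (hu : 0 < u) : stdPDF u / u ≤ (1 + 1/u^2) * stdTail u := by
  have hd : ∀ s ∈ Set.Ici u, HasDerivAt (fun s => -(stdPDF s / s))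
      (stdPDF s + stdPDF s / s^2) s := by
    intro s hs
    have hus : u ≤ s := hs
    have hs0 : s ≠ 0 := ne_of_gt (lt_of_lt_of_le hu hus)
    have hpdf : HasDerivAt stdPDF (-(s * stdPDF s)) s := by
      have h := (hasDerivAt_neg_stdPDF s).neg
      simpa [Pi.neg_def] using h
    have h2 := (hpdf.div (hasDerivAt_id s) hs0).neg
    refine h2.congr_deriv ?_
    simp only [id]
    field_simp
    ring
  have hint : IntegrableOn (fun s => stdPDF s + stdPDF s / s^2) (Set.Ioi u) := by
    refine integrable_stdPDF.integrableOn.add ?_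
    have hg : IntegrableOn (fun s => (1/u^2) * stdPDF s) (Set.Ioi u) :=
      integrable_stdPDF.integrableOn.const_mul _
    refine hg.mono' ?_ ?_
    · exact (continuous_stdPDF.continuousOn.div ((continuous_pow 2).continuousOn)
        (fun s hs => pow_ne_zero _ (ne_of_gt (hu.trans hs)))).aestronglyMeasurable
        measurableSet_Ioi
    · refine (ae_restrict_iff' measurableSet_Ioi).2 (Filter.Eventually.of_forall ?_)
      intro s hs
      have hs' : u < s := hs
      have hps := stdPDF_pos s
      have hsp : (0:ℝ) < s := hu.trans hs'
      have hsq : (0:ℝ) < s^2 := by positivity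
      rw [Real.norm_eq_abs, abs_of_pos (div_pos hps hsq)]
      rw [div_le_iff₀ hsq, mul_assoc]
      have h3 : u^2 ≤ s^2 := by nlinarith
      calc stdPDF s = stdPDF s * 1 := (mul_one _).symm
        _ ≤ stdPDF s * (s^2 / u^2) := by
            refine mul_le_mul_of_nonneg_left ?_ hps.le
            rw [le_div_iff₀ (by positivity)]; linarith
        _ = 1/u^2 * (stdPDF s * s^2) := by ring
  have htend : Tendsto (fun s : ℝ => -(stdPDF s / s)) atTop (nhds 0) := by
    have h := (tendsto_stdPDF_atTop.div_atTop tendsto_id).neg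
    simpa using h
  have key : ∫ s in Set.Ioi u, (stdPDF s + stdPDF s / s^2) = stdPDF u / u := by
    have h := integral_Ioi_of_hasDerivAt_of_tendsto' (a := u) hd hint htend
    simpa using h
  have hmono : ∫ s in Set.Ioi u, (stdPDF s + stdPDF s / s^2)
      ≤ ∫ s in Set.Ioi u, (1 + 1/u^2) * stdPDF s := by
    refine setIntegral_mono_on hint (integrable_stdPDF.integrableOn.const_mul _)
      measurableSet_Ioi ?_
    intro s hs
    have hs' : u < s := hs
    have hps := stdPDF_pos s
    have h1 : stdPDF s / s^2 ≤ stdPDF s / u^2 := by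
      apply div_le_div_of_nonneg_left hps.le (by positivity)
      nlinarith
    have h2 : (1 + 1/u^2) * stdPDF s = stdPDF s + stdPDF s / u^2 := by ring
    linarith
  calc stdPDF u / u = ∫ s in Set.Ioi u, (stdPDF s + stdPDF s / s^2) := key.symm
    _ ≤ ∫ s in Set.Ioi u, (1 + 1/u^2) * stdPDF s := hmono
    _ = (1 + 1/u^2) * stdTail u := MeasureTheory.integral_const_mul _ _

/-- Mills-ratio estimator `τ̂(x, σ²) = (1/σ)(1 − Φ(x/σ))/φ(x/σ)`. -/
noncomputable def millsTau (σ x : ℝ) : ℝ :=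
  (1 / σ) * (1 - stdCDF (x / σ)) / stdPDF (x / σ)

lemma sq_sqrt_two : (Real.sqrt 2)^2 = 2 := Real.sq_sqrt (by norm_num)

lemma millsTau_nonneg (x : ℝ) : 0 ≤ millsTau (Real.sqrt 2) x := by
  rw [millsTau, one_sub_stdCDF]
  have h1 : (0:ℝ) ≤ 1 / Real.sqrt 2 := by positivity
  exact div_nonneg (mul_nonneg h1 (stdTail_nonneg _)) (stdPDF_pos _).le

lemma millsTau_le_inv {x : ℝ} (hx : 0 < x) : millsTau (Real.sqrt 2) x ≤ 1/x := by
  set u := x / Real.sqrt 2 with hu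
  have hs2 : (0:ℝ) < Real.sqrt 2 := by positivity
  have hup : 0 < u := div_pos hx hs2
  have hphi := stdPDF_pos u
  have h := millsUp hup
  rw [millsTau, one_sub_stdCDF]
  calc (1 / Real.sqrt 2) * stdTail u / stdPDF u
      ≤ (1 / Real.sqrt 2) * (stdPDF u / u) / stdPDF u := by
        apply div_le_div_of_nonneg_right ?_ hphi.le
        exact mul_le_mul_of_nonneg_left h (by positivity)
    _ = 1/x := by
        rw [hu]
        field_simp
        ring
        exact mul_inv_cancel₀ (stdPDF_pos _).ne'
    _ ≤ 1/x := le_refl _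

lemma millsTau_ge {x : ℝ} (hx : 0 < x) : x/(x^2+2) ≤ millsTau (Real.sqrt 2) x := by
  set u := x / Real.sqrt 2 with hu
  have hs2 : (0:ℝ) < Real.sqrt 2 := by positivity
  have hup : 0 < u := div_pos hx hs2
  have hphi := stdPDF_pos u
  have h := millsLow hup
  have hT := stdTail_nonneg u
  have h3 : stdPDF u * u ≤ (u^2+1) * stdTail u := by
    have e1 : stdPDF u / u * u = stdPDF u := div_mul_cancel₀ _ hup.ne'
    have h2 := mul_le_mul_of_nonneg_right h hup.le
    rw [e1] at h2
    have h3' := mul_le_mul_of_nonneg_right h2 hup.le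
    have e2 : (1 + 1/u^2) * stdTail u * u * u = (u^2+1) * stdTail u := by
      field_simp
    calc stdPDF u * u ≤ (1 + 1/u^2) * stdTail u * u * u := h3'
      _ = (u^2+1) * stdTail u := e2
  have h4 : stdPDF u * u / (u^2+1) ≤ stdTail u := by
    rw [div_le_iff₀ (by positivity)]
    linarith
  rw [millsTau, one_sub_stdCDF]
  have hu2 : u^2 = x^2/2 := by rw [hu, div_pow, sq_sqrt_two]
  have key2 : (1 / Real.sqrt 2) * (stdPDF u * u / (u^2+1)) / stdPDF u = x/(x^2+2) := by
    have e3 : (1 / Real.sqrt 2) * (stdPDF u * u / (u^2+1)) / stdPDF u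
        = (1/Real.sqrt 2) * u / (u^2+1) := by
      field_simp
    rw [e3, hu, div_pow, sq_sqrt_two]
    rw [div_eq_div_iff (by positivity) (by positivity)]
    field_simp
    exact sq_sqrt_two.symm
  calc x/(x^2+2) = (1 / Real.sqrt 2) * (stdPDF u * u / (u^2+1)) / stdPDF u := key2.symm
    _ ≤ (1 / Real.sqrt 2) * stdTail u / stdPDF u := by
        apply div_le_div_of_nonneg_right ?_ hphi.le
        exact mul_le_mul_of_nonneg_left h4 (by positivity)

lemma millsTau_le_exp (x : ℝ) :
    millsTau (Real.sqrt 2) x ≤ Real.sqrt Real.pi * Real.exp (x^2/4) := by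
  set u := x / Real.sqrt 2 with hu
  have hs2 : (0:ℝ) < Real.sqrt 2 := by positivity
  have hphi := stdPDF_pos u
  have hu2 : u^2 = x^2/2 := by rw [hu, div_pow, sq_sqrt_two]
  rw [millsTau, one_sub_stdCDF]
  calc (1 / Real.sqrt 2) * stdTail u / stdPDF u
      ≤ (1 / Real.sqrt 2) * 1 / stdPDF u := by
        apply div_le_div_of_nonneg_right ?_ hphi.le
        exact mul_le_mul_of_nonneg_left (stdTail_le_one u) (by positivity)
    _ = Real.sqrt Real.pi * Real.exp (x^2/4) := by
        have hst : stdPDF u = (Real.sqrt (2*Real.pi))⁻¹ * Real.exp (-(u^2)/2) := rfl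
        rw [hst, hu2]
        rw [Real.sqrt_mul (by norm_num : (0:ℝ) ≤ 2)]
        rw [show -(x^2/2)/2 = -(x^2/4) by ring, Real.exp_neg]
        field_simp

lemma exp_quad {y : ℝ} (hy : 0 ≤ y) : y^2 ≤ 4 * Real.exp y := by
  have h := Real.add_one_le_exp (y/2)
  have hsq : Real.exp (y/2) * Real.exp (y/2) = Real.exp y := by
    rw [← Real.exp_add]; ring_nf
  nlinarith [Real.exp_pos (y/2)]

lemma t4_bound {t : ℝ} (ht : 1 ≤ t) : t^4 ≤ 136 * Real.exp ((t-1)^2/2) := by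
  set s := t - 1 with hs
  have hs0 : 0 ≤ s := by simp [hs]; linarith
  have h1 : (s^2/2)^2 ≤ 4 * Real.exp (s^2/2) := exp_quad (by positivity)
  have h2 : (1:ℝ) ≤ Real.exp (s^2/2) := Real.one_le_exp (by positivity)
  have ht4 : t^4 = (1+s)^4 := by rw [hs]; ring
  rw [ht4]
  nlinarith [sq_nonneg (s-1), sq_nonneg (s^2-1), sq_nonneg (s^2-s), sq_nonneg s,
    mul_nonneg (mul_nonneg hs0 hs0) hs0]

lemma z4_bound (z : ℝ) : (2+|z|)^4 ≤ 8320 * Real.exp ((1/4) * z^2) := by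
  have h1 : (z^2/4)^2 ≤ 4 * Real.exp (z^2/4) := exp_quad (by positivity)
  have h2 : (1:ℝ) ≤ Real.exp (z^2/4) := Real.one_le_exp (by positivity)
  have hz : 0 ≤ |z| := abs_nonneg z
  have hz2 : |z|^2 = z^2 := sq_abs z
  have heq : (1/4) * z^2 = z^2/4 := by ring
  rw [heq]
  nlinarith [sq_nonneg (|z| - 1), sq_nonneg (|z|^2 - 2), sq_nonneg (|z|^2 - |z|),
    mul_nonneg (mul_nonneg hz hz) hz]


lemma regionC {p t z : ℝ} (hp1 : 1 ≤ p) (hp2 : p < 2) (ht : 1 ≤ t) (hx : 1 ≤ t + z) :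
    t^p * |millsTau (Real.sqrt 2) (t+z) * t - 1|^p ≤ (2+|z|)^4 := by
  have hx0 : 0 < t + z := lt_of_lt_of_le one_pos hx
  have h1 := millsTau_le_inv hx0
  have h2 := millsTau_ge hx0
  have hz : 0 ≤ |z| := abs_nonneg z
  have hza : -|z| ≤ z := neg_abs_le z
  have hzb : z ≤ |z| := le_abs_self z
  set x := t + z with hxdef
  set M := millsTau (Real.sqrt 2) x with hM
  have ht0 : (0:ℝ) < t := lt_of_lt_of_le one_pos ht
  have hden : (0:ℝ) < x^2 + 2 := by positivity
  have hMx : M * x ≤ 1 := by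
    have h := mul_le_mul_of_nonneg_right h1 hx0.le
    rwa [one_div, inv_mul_cancel₀ hx0.ne'] at h
  have h2' : x ≤ M * (x^2+2) := by
    have := (div_le_iff₀ hden).mp h2
    linarith
  have hub : (M * t - 1) * x ≤ 2 + |z| := by
    nlinarith [mul_nonneg (sub_nonneg.2 hMx) ht0.le]
  have hlb : -(2 + |z|) ≤ (M * t - 1) * x := by
    nlinarith [mul_nonneg (sub_nonneg.2 h2') (mul_nonneg hx0.le ht0.le),
      mul_nonneg (sq_nonneg x) (by linarith : (0:ℝ) ≤ |z| - z),
      mul_nonneg (by linarith : (0:ℝ) ≤ x - 1) hx0.le]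
  set A := |M * t - 1| with hA
  have habs : A * x ≤ 2 + |z| := by
    rw [hA, ← abs_of_pos hx0, ← abs_mul]
    exact abs_le.2 ⟨hlb, hub⟩
  have hAnn : 0 ≤ A := abs_nonneg _
  have ht_le : t ≤ x * (1 + |z|) := by nlinarith
  have h5 : t * A ≤ (2+|z|)^2 := by
    nlinarith [mul_nonneg (sub_nonneg.2 ht_le) hAnn,
      mul_nonneg (sub_nonneg.2 habs) (by linarith : (0:ℝ) ≤ 1 + |z|)]
  have hp0 : (0:ℝ) ≤ p := by linarith
  have hbase : (1:ℝ) ≤ 2 + |z| := by linarith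
  calc t^p * A^p = (t*A)^p := (Real.mul_rpow ht0.le hAnn).symm
    _ ≤ ((2+|z|)^2)^p := Real.rpow_le_rpow (by positivity) h5 hp0
    _ = (2+|z|)^((2:ℕ) * p) := by
        rw [← Real.rpow_natCast (2+|z|) 2, ← Real.rpow_mul (by linarith)]
    _ ≤ (2+|z|)^((4:ℕ) : ℝ) := by
        apply Real.rpow_le_rpow_of_exponent_le hbase
        push_cast; linarith
    _ = (2+|z|)^4 := Real.rpow_natCast _ 4

lemma regionAll {p t z : ℝ} (hp1 : 1 ≤ p) (hp2 : p < 2) (ht : 1 ≤ t) :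
    t^p * |millsTau (Real.sqrt 2) (t+z) * t - 1|^p
      ≤ 4 * Real.pi * t^4 * Real.exp (p * ((t+z)^2/4)) := by
  set x := t + z with hxdef
  set M := millsTau (Real.sqrt 2) x with hM
  have ht0 : (0:ℝ) < t := lt_of_lt_of_le one_pos ht
  have h1 := millsTau_le_exp x
  have h0 := millsTau_nonneg x
  have hE : (1:ℝ) ≤ Real.exp (x^2/4) := Real.one_le_exp (by positivity)
  have hpi : (1:ℝ) ≤ Real.pi := by nlinarith [Real.pi_gt_three]
  have hspi : (1:ℝ) ≤ Real.sqrt Real.pi := by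
    rw [show (1:ℝ) = Real.sqrt 1 by simp]
    exact Real.sqrt_le_sqrt hpi
  set A := |M * t - 1| with hA
  have hMt := mul_le_mul_of_nonneg_right h1 ht0.le
  have hone : (1:ℝ) ≤ Real.sqrt Real.pi * t * Real.exp (x^2/4) := by
    have h5 : (1:ℝ) ≤ Real.sqrt Real.pi * t := by nlinarith
    nlinarith
  have hb : A ≤ 2 * Real.sqrt Real.pi * t * Real.exp (x^2/4) := by
    have h3 : A ≤ |M * t| + 1 := by
      rw [hA]
      calc |M * t - 1| ≤ |M * t| + |(1:ℝ)| := abs_sub _ _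
        _ = |M * t| + 1 := by rw [abs_one]
    have h4 : |M * t| = M * t := abs_of_nonneg (mul_nonneg h0 ht0.le)
    nlinarith
  have ha : 0 ≤ t * A := mul_nonneg ht0.le (abs_nonneg _)
  have hbb : t * A ≤ 2 * Real.sqrt Real.pi * t^2 * Real.exp (x^2/4) := by
    have := mul_le_mul_of_nonneg_left hb ht0.le
    nlinarith
  have hbase1 : (1:ℝ) ≤ 2 * Real.sqrt Real.pi * t^2 := by nlinarith
  calc t^p * A^p = (t*A)^p := (Real.mul_rpow ht0.le (abs_nonneg _)).symm
    _ ≤ (2 * Real.sqrt Real.pi * t^2 * Real.exp (x^2/4))^p :=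
        Real.rpow_le_rpow ha hbb (by linarith)
    _ = (2 * Real.sqrt Real.pi * t^2)^p * (Real.exp (x^2/4))^p :=
        Real.mul_rpow (by positivity) (Real.exp_pos _).le
    _ = (2 * Real.sqrt Real.pi * t^2)^p * Real.exp (p * (x^2/4)) := by
        rw [← Real.exp_mul, mul_comm (x^2/4) p]
    _ ≤ (2 * Real.sqrt Real.pi * t^2)^((2:ℕ):ℝ) * Real.exp (p * (x^2/4)) := by
        apply mul_le_mul_of_nonneg_right ?_ (Real.exp_pos _).le
        apply Real.rpow_le_rpow_of_exponent_le hbase1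
        push_cast; linarith
    _ = 4 * Real.pi * t^4 * Real.exp (p * (x^2/4)) := by
        rw [Real.rpow_natCast]
        have hsq : (2 * Real.sqrt Real.pi * t^2)^2 = 4 * Real.pi * t^4 := by
          rw [mul_pow, mul_pow, Real.sq_sqrt Real.pi_pos.le]
          ring
        rw [hsq]

lemma regionLow {p t z : ℝ} (hp1 : 1 ≤ p) (hp2 : p < 2) (ht : 1 ≤ t) (hz : t + z ≤ 1) :
    stdPDF z * (4 * Real.pi * t^4 * Real.exp (p * ((t+z)^2/4)))
      ≤ (Real.sqrt (2*Real.pi))⁻¹ * (544 * Real.pi * Real.exp (1/2))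
        * Real.exp (-((2-p)/4) * (t+z)^2) := by
  set x := t + z with hxdef
  have ht0 : (0:ℝ) < t := lt_of_lt_of_le one_pos ht
  have hkey : t^4 * Real.exp (x^2/2 - z^2/2) ≤ 136 * Real.exp (1/2) := by
    have hle : x^2/2 - z^2/2 ≤ 1/2 - (t-1)^2/2 := by nlinarith
    calc t^4 * Real.exp (x^2/2 - z^2/2)
        ≤ (136 * Real.exp ((t-1)^2/2)) * Real.exp (1/2 - (t-1)^2/2) := by
          apply mul_le_mul (t4_bound ht) (Real.exp_le_exp.2 hle) (Real.exp_pos _).le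
          positivity
      _ = 136 * Real.exp (1/2) := by
          rw [mul_assoc, ← Real.exp_add]
          ring_nf
  have he1 : Real.exp (p * (x^2/4)) * Real.exp (-(z^2)/2)
      = Real.exp (x^2/2 - z^2/2) * Real.exp (-((2-p)/4) * x^2) := by
    rw [← Real.exp_add, ← Real.exp_add]
    congr 1
    ring
  have hc : (0:ℝ) < (Real.sqrt (2*Real.pi))⁻¹ := by positivity
  have lhs_eq : stdPDF z * (4 * Real.pi * t^4 * Real.exp (p * (x^2/4)))
      = (Real.sqrt (2*Real.pi))⁻¹ * (4 * Real.pi)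
        * ((t^4 * Real.exp (x^2/2 - z^2/2)) * Real.exp (-((2-p)/4) * x^2)) := by
    unfold stdPDF
    rw [show (Real.sqrt (2*Real.pi))⁻¹ * Real.exp (-(z ^ 2) / 2) * (4 * Real.pi * t ^ 4 * Real.exp (p * (x ^ 2 / 4))) = (Real.sqrt (2*Real.pi))⁻¹ * (4 * Real.pi) * (t^4 * (Real.exp (p * (x^2/4)) * Real.exp (-(z^2)/2))) by ring, he1]
    ring
  rw [lhs_eq]
  have hfinal : (t^4 * Real.exp (x^2/2 - z^2/2)) * Real.exp (-((2-p)/4) * x^2)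
      ≤ (136 * Real.exp (1/2)) * Real.exp (-((2-p)/4) * x^2) :=
    mul_le_mul_of_nonneg_right hkey (Real.exp_pos _).le
  calc (Real.sqrt (2*Real.pi))⁻¹ * (4 * Real.pi)
        * ((t^4 * Real.exp (x^2/2 - z^2/2)) * Real.exp (-((2-p)/4) * x^2))
      ≤ (Real.sqrt (2*Real.pi))⁻¹ * (4 * Real.pi)
        * ((136 * Real.exp (1/2)) * Real.exp (-((2-p)/4) * x^2)) := by
        apply mul_le_mul_of_nonneg_left hfinal
        positivity
    _ = (Real.sqrt (2*Real.pi))⁻¹ * (544 * Real.pi * Real.exp (1/2))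
        * Real.exp (-((2-p)/4) * x^2) := by ring

lemma g1_bound (z : ℝ) : stdPDF z * (2+|z|)^4
    ≤ (Real.sqrt (2*Real.pi))⁻¹ * 8320 * Real.exp (-(1/4) * z^2) := by
  have h := z4_bound z
  have he : Real.exp (-(z^2)/2) * Real.exp ((1/4)*z^2) = Real.exp (-(1/4)*z^2) := by
    rw [← Real.exp_add]; ring_nf
  unfold stdPDF
  calc (Real.sqrt (2*Real.pi))⁻¹ * Real.exp (-(z^2)/2) * (2+|z|)^4
      ≤ (Real.sqrt (2*Real.pi))⁻¹ * Real.exp (-(z^2)/2) * (8320 * Real.exp ((1/4)*z^2)) := by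
        apply mul_le_mul_of_nonneg_left h (by positivity)
    _ = (Real.sqrt (2*Real.pi))⁻¹ * 8320 * (Real.exp (-(z^2)/2) * Real.exp ((1/4)*z^2)) := by
        ring
    _ = (Real.sqrt (2*Real.pi))⁻¹ * 8320 * Real.exp (-(1/4)*z^2) := by rw [he]

lemma gaussianPDF_eq_stdPDF (z : ℝ) : gaussianPDF 0 1 z = ENNReal.ofReal (stdPDF z) := by
  simp only [gaussianPDF, gaussianPDFReal, stdPDF]
  norm_num

/-- For 1 ≤ p < 2, the scaled p-th moment tᵖ·∫ |τ̂(t+z,2)·t − 1|ᵖ φ(z) dz is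
bounded uniformly over t ≥ 1. -/
theorem stmt18 (p : ℝ) (hp1 : 1 ≤ p) (hp2 : p < 2) :
    ∃ C : ℝ, ∀ t : ℝ, 1 ≤ t →
      ENNReal.ofReal (t ^ p) *
        ∫⁻ z, ENNReal.ofReal (|millsTau (Real.sqrt 2) (t + z) * t - 1| ^ p)
          ∂(gaussianReal 0 1)
        ≤ ENNReal.ofReal C := by
  set C1 : ℝ := (Real.sqrt (2*Real.pi))⁻¹ * 8320 * Real.sqrt (Real.pi / (1/4)) with hC1
  set K2 : ℝ := (Real.sqrt (2*Real.pi))⁻¹ * (544 * Real.pi * Real.exp (1/2)) with hK2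
  set b : ℝ := (2-p)/4 with hbdef
  have hbpos : 0 < b := by rw [hbdef]; linarith
  set C2 : ℝ := K2 * Real.sqrt (Real.pi / b) with hC2
  have hC1nn : 0 ≤ C1 := by rw [hC1]; positivity
  have hK2nn : 0 ≤ K2 := by rw [hK2]; positivity
  have hC2nn : 0 ≤ C2 := by rw [hC2]; positivity
  refine ⟨C1 + C2, fun t ht => ?_⟩
  have ht0 : (0:ℝ) < t := lt_of_lt_of_le one_pos ht
  have hγ : gaussianReal 0 1 = volume.withDensity (gaussianPDF 0 1) :=
    gaussianReal_of_var_ne_zero 0 one_ne_zero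
  set g1 : ℝ → ENNReal := fun z => ENNReal.ofReal ((2+|z|)^4) with hg1
  set g2 : ℝ → ENNReal :=
    fun z => ENNReal.ofReal (4 * Real.pi * t^4 * Real.exp (p * ((t+z)^2/4))) with hg2
  set ind : ℝ → ENNReal := (Set.Iic (1-t)).indicator g2 with hind
  have hg1m : Measurable g1 := by
    apply Measurable.ennreal_ofReal
    exact ((continuous_const.add continuous_abs).pow 4).measurable
  have hg2m : Measurable g2 := by
    apply Measurable.ennreal_ofReal
    fun_prop
  have hindm : Measurable ind := hg2m.indicator measurableSet_Iic
  have hpt : ∀ z : ℝ, ENNReal.ofReal (t ^ p) *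
      ENNReal.ofReal (|millsTau (Real.sqrt 2) (t + z) * t - 1| ^ p) ≤ g1 z + ind z := by
    intro z
    rw [← ENNReal.ofReal_mul (Real.rpow_nonneg ht0.le p)]
    by_cases hc : t + z ≤ 1
    · have hmem : z ∈ Set.Iic (1-t) := by simp only [Set.mem_Iic]; linarith
      have : ind z = g2 z := Set.indicator_of_mem hmem g2
      rw [this]
      calc ENNReal.ofReal (t ^ p * |millsTau (Real.sqrt 2) (t + z) * t - 1| ^ p)
          ≤ g2 z := ENNReal.ofReal_le_ofReal (regionAll hp1 hp2 ht)
        _ ≤ g1 z + g2 z := le_add_self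
    · push_neg at hc
      calc ENNReal.ofReal (t ^ p * |millsTau (Real.sqrt 2) (t + z) * t - 1| ^ p)
          ≤ g1 z := ENNReal.ofReal_le_ofReal (regionC hp1 hp2 ht hc.le)
        _ ≤ g1 z + ind z := le_self_add
  have B1 : ∫⁻ z, g1 z ∂(gaussianReal 0 1) ≤ ENNReal.ofReal C1 := by
    rw [hγ, lintegral_withDensity_eq_lintegral_mul _ (measurable_gaussianPDF 0 1) hg1m]
    have hint1 : Integrable (fun z : ℝ =>
        (Real.sqrt (2*Real.pi))⁻¹ * 8320 * Real.exp (-(1/4) * z^2)) := by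
      exact (integrable_exp_neg_mul_sq (by norm_num)).const_mul _
    calc ∫⁻ z, (gaussianPDF 0 1 * g1) z ∂volume
        ≤ ∫⁻ z, ENNReal.ofReal ((Real.sqrt (2*Real.pi))⁻¹ * 8320
            * Real.exp (-(1/4) * z^2)) ∂volume := by
          apply lintegral_mono
          intro z
          simp only [Pi.mul_apply, gaussianPDF_eq_stdPDF, hg1]
          rw [← ENNReal.ofReal_mul (stdPDF_pos z).le]
          exact ENNReal.ofReal_le_ofReal (g1_bound z)
      _ = ENNReal.ofReal (∫ z, (Real.sqrt (2*Real.pi))⁻¹ * 8320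
            * Real.exp (-(1/4) * z^2)) := by
          rw [← ofReal_integral_eq_lintegral_ofReal hint1
            (Filter.Eventually.of_forall fun z => by positivity)]
      _ = ENNReal.ofReal C1 := by
          rw [MeasureTheory.integral_const_mul, integral_gaussian, hC1]
  have B2 : ∫⁻ z, ind z ∂(gaussianReal 0 1) ≤ ENNReal.ofReal C2 := by
    rw [hγ, lintegral_withDensity_eq_lintegral_mul _ (measurable_gaussianPDF 0 1) hindm]
    have hint2 : Integrable (fun x : ℝ => K2 * Real.exp (-b * x^2)) :=
      (integrable_exp_neg_mul_sq hbpos).const_mul _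
    calc ∫⁻ z, (gaussianPDF 0 1 * ind) z ∂volume
        ≤ ∫⁻ z, ENNReal.ofReal (K2 * Real.exp (-b * (t+z)^2)) ∂volume := by
          apply lintegral_mono
          intro z
          simp only [Pi.mul_apply, gaussianPDF_eq_stdPDF]
          by_cases hc : z ∈ Set.Iic (1-t)
          · rw [hind, Set.indicator_of_mem hc g2, hg2,
              ← ENNReal.ofReal_mul (stdPDF_pos z).le]
            apply ENNReal.ofReal_le_ofReal
            have hz1 : t + z ≤ 1 := by have := hc; simp only [Set.mem_Iic] at this; linarith
            have := regionLow hp1 hp2 ht hz1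
            calc stdPDF z * (4 * Real.pi * t^4 * Real.exp (p * ((t+z)^2/4)))
                ≤ (Real.sqrt (2*Real.pi))⁻¹ * (544 * Real.pi * Real.exp (1/2))
                  * Real.exp (-((2-p)/4) * (t+z)^2) := this
              _ = K2 * Real.exp (-b * (t+z)^2) := by rw [hK2, hbdef]
          · rw [hind, Set.indicator_of_notMem hc g2, mul_zero]
            exact zero_le
      _ = ∫⁻ x, ENNReal.ofReal (K2 * Real.exp (-b * x^2)) ∂volume :=
          lintegral_add_left_eq_self (fun x => ENNReal.ofReal (K2 * Real.exp (-b * x^2))) t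
      _ = ENNReal.ofReal (∫ x, K2 * Real.exp (-b * x^2)) := by
          rw [← ofReal_integral_eq_lintegral_ofReal hint2
            (Filter.Eventually.of_forall fun x => by positivity)]
      _ = ENNReal.ofReal C2 := by
          rw [MeasureTheory.integral_const_mul, integral_gaussian, hC2]
  calc ENNReal.ofReal (t ^ p) *
        ∫⁻ z, ENNReal.ofReal (|millsTau (Real.sqrt 2) (t + z) * t - 1| ^ p)
          ∂(gaussianReal 0 1)
      = ∫⁻ z, ENNReal.ofReal (t ^ p) *
          ENNReal.ofReal (|millsTau (Real.sqrt 2) (t + z) * t - 1| ^ p)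
          ∂(gaussianReal 0 1) :=
        (lintegral_const_mul' _ _ ENNReal.ofReal_ne_top).symm
    _ ≤ ∫⁻ z, (g1 z + ind z) ∂(gaussianReal 0 1) := lintegral_mono hpt
    _ = (∫⁻ z, g1 z ∂(gaussianReal 0 1)) + ∫⁻ z, ind z ∂(gaussianReal 0 1) :=
        lintegral_add_left hg1m _
    _ ≤ ENNReal.ofReal C1 + ENNReal.ofReal C2 := add_le_add B1 B2
    _ = ENNReal.ofReal (C1 + C2) := (ENNReal.ofReal_add hC1nn hC2nn).symm
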